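/- Let ζ₁, ζ₂ ∈ 𝔻 ⊂ ℂ and let w₁ = g₁ + h₁·j and w₂ = g₂ + h₂·j with g₁, g₂, h₁, h₂ ∈ ℂ (complex numbers identified with quaternions). Then ∑_{k=0}^∞ ζ₁^k · (1 − w₁·star w₂) · (star ζ₂)^k = (1 − g₁·conj(g₂) − h₁·conj(h₂))/(1 − ζ₁·conj(ζ₂)) + ((g₁·h₂ − h₁·g₂)/(1 − ζ₁·ζ₂))·j, where the first summand is a complex quaternion and the second lies in ℂ·j. -/

import Mathlib

open Quaternion Filter Matrix

noncomputable section

/-- The imaginary unit `i` of the real quaternions. -/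
def qi : ℍ := ⟨0, 1, 0, 0⟩

/-- The imaginary unit `j` of the real quaternions. -/
def qj : ℍ := ⟨0, 0, 1, 0⟩

/-- The Pick matrix of `f : ℍ → ℍ` at the points `z 0, …, z (n-1)` of the unit ball:
its `(i,j)` entry is `∑ₖ (z i)^k (1 - f(z i) * star f(z j)) (star (z j))^k`. -/
def pickMatrix {n : ℕ} (f : ℍ → ℍ) (z : Fin n → ℍ) : Matrix (Fin n) (Fin n) ℍ :=
  Matrix.of fun i j => ∑' k : ℕ, z i ^ k * (1 - f (z i) * star (f (z j))) * (star (z j)) ^ k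

/-- A quaternionic matrix is positive semidefinite if every quadratic form
`∑ᵢⱼ star (v i) * P i j * v j` is a nonnegative real scalar quaternion. -/
def QPosSemidef {n : ℕ} (P : Matrix (Fin n) (Fin n) ℍ) : Prop :=
  ∀ v : Fin n → ℍ, ∃ r : ℝ, 0 ≤ r ∧ (∑ i, ∑ j, star (v i) * P i j * v j) = (r : ℍ)

/-- `f` is left-regular on the unit ball: it is given there by an (absolutely convergent)
power series with quaternionic coefficients on the right. -/
def LeftRegular (f : ℍ → ℍ) : Prop :=
  ∃ c : ℕ → ℍ,
    Filter.limsup (fun k : ℕ => ‖c k‖ ^ (1 / (k : ℝ))) Filter.atTop ≤ 1 ∧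
    ∀ α : ℍ, ‖α‖ < 1 → f α = ∑' k : ℕ, α ^ k * c k

/-- The `n × n` lower-triangular Toeplitz matrix built from a sequence. -/
def toeplitz {R : Type*} [Zero R] (n : ℕ) (g : ℕ → R) : Matrix (Fin n) (Fin n) R :=
  Matrix.of fun i j => if (j : ℕ) ≤ (i : ℕ) then g ((i : ℕ) - (j : ℕ)) else 0

@[simp] lemma qj_re : qj.re = 0 := rfl
@[simp] lemma qj_imI : qj.imI = 0 := rfl
@[simp] lemma qj_imJ : qj.imJ = 1 := rfl
@[simp] lemma qj_imK : qj.imK = 0 := rfl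

lemma coe_star' (z : ℂ) : star (z : ℍ) = ((starRingEnd ℂ) z : ℍ) := by
  ext <;> simp

lemma qj_mul_coe (z : ℂ) : qj * (z : ℍ) = ((starRingEnd ℂ) z : ℍ) * qj := by
  ext <;> simp

lemma coe_pow' (z : ℂ) (k : ℕ) : ((z ^ k : ℂ) : ℍ) = (z : ℍ) ^ k :=
  map_pow Quaternion.ofComplex z k

/-- `(a, b) ↦ a + b * j` as an ℝ-linear map `ℂ × ℂ → ℍ`. -/
def Fmap : (ℂ × ℂ) →ₗ[ℝ] ℍ where
  toFun p := (p.1 : ℍ) + (p.2 : ℍ) * qj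
  map_add' p q := by ext <;> simp
  map_smul' r p := by ext <;> simp

/-- Decomposition of the Pick kernel at complex points: for `w₁ = g₁ + h₁ j` and
`w₂ = g₂ + h₂ j` with complex `gᵢ, hᵢ` and complex points `ζ₁, ζ₂` of the unit disk,
the kernel splits into a complex part and a part in `ℂ·j`. -/
theorem slice_kernel_decomposition (ζ₁ ζ₂ : ℂ) (hζ₁ : ‖ζ₁‖ < 1) (hζ₂ : ‖ζ₂‖ < 1)
    (g₁ g₂ h₁ h₂ : ℂ) (w₁ w₂ : ℍ)
    (hw₁ : w₁ = (g₁ : ℍ) + (h₁ : ℍ) * qj) (hw₂ : w₂ = (g₂ : ℍ) + (h₂ : ℍ) * qj) :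
    (∑' k : ℕ, (ζ₁ : ℍ) ^ k * (1 - w₁ * star w₂) * (star (ζ₂ : ℍ)) ^ k) =
      (((1 - g₁ * (starRingEnd ℂ) g₂ - h₁ * (starRingEnd ℂ) h₂) /
          (1 - ζ₁ * (starRingEnd ℂ) ζ₂) : ℂ) : ℍ) +
      (((g₁ * h₂ - h₁ * g₂) / (1 - ζ₁ * ζ₂) : ℂ) : ℍ) * qj := by
  set A : ℂ := 1 - g₁ * (starRingEnd ℂ) g₂ - h₁ * (starRingEnd ℂ) h₂ with hA
  set B : ℂ := g₁ * h₂ - h₁ * g₂ with hB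
  have hjj : qj * qj = -1 := by ext <;> simp
  -- kernel decomposition
  have key : 1 - w₁ * star w₂ = (A : ℍ) + (B : ℍ) * qj := by
    have hstarqj : star qj = -qj := by ext <;> simp
    have hsw₂ : star w₂ = ((starRingEnd ℂ) g₂ : ℍ) - (h₂ : ℍ) * qj := by
      rw [hw₂, star_add, coe_star', StarMul.star_mul, coe_star', hstarqj, neg_mul,
        qj_mul_coe, Complex.conj_conj, sub_eq_add_neg]
    rw [hw₁, hsw₂, hA, hB]
    have e1 : qj * ((starRingEnd ℂ) g₂ : ℍ) = (g₂ : ℍ) * qj := by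
      rw [qj_mul_coe, Complex.conj_conj]
    have e2 : qj * (h₂ : ℍ) = ((starRingEnd ℂ) h₂ : ℍ) * qj := qj_mul_coe h₂
    calc (1 : ℍ) - ((g₁:ℍ) + (h₁:ℍ) * qj) * (((starRingEnd ℂ) g₂ : ℍ) - (h₂:ℍ) * qj)
        = 1 - (g₁:ℍ) * ((starRingEnd ℂ) g₂ : ℍ) + (g₁:ℍ) * (h₂:ℍ) * qj
          - (h₁:ℍ) * (qj * ((starRingEnd ℂ) g₂ : ℍ)) * 1
          + (h₁:ℍ) * (qj * (h₂:ℍ)) * qj := by noncomm_ring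
      _ = 1 - (g₁:ℍ) * ((starRingEnd ℂ) g₂ : ℍ) + (g₁:ℍ) * (h₂:ℍ) * qj
          - (h₁:ℍ) * ((g₂:ℍ) * qj) * 1
          + (h₁:ℍ) * (((starRingEnd ℂ) h₂ : ℍ) * qj) * qj := by rw [e1, e2]
      _ = 1 - (g₁:ℍ) * ((starRingEnd ℂ) g₂ : ℍ) + (g₁:ℍ) * (h₂:ℍ) * qj
          - (h₁:ℍ) * ((g₂:ℍ) * qj) * 1
          + (h₁:ℍ) * (((starRingEnd ℂ) h₂ : ℍ) * (qj * qj)) := by noncomm_ring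
      _ = ((1 - g₁ * (starRingEnd ℂ) g₂ - h₁ * (starRingEnd ℂ) h₂ : ℂ) : ℍ)
          + ((g₁ * h₂ - h₁ * g₂ : ℂ) : ℍ) * qj := by
            rw [hjj]; ext <;> simp <;> ring
  -- termwise identity
  have term : ∀ k : ℕ, (ζ₁ : ℍ) ^ k * (1 - w₁ * star w₂) * (star (ζ₂ : ℍ)) ^ k
      = ((A * (ζ₁ * (starRingEnd ℂ) ζ₂) ^ k : ℂ) : ℍ)
        + ((B * (ζ₁ * ζ₂) ^ k : ℂ) : ℍ) * qj := by
    intro k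
    rw [key, coe_star', ← coe_pow', ← coe_pow']
    have e3 : qj * (((starRingEnd ℂ) ζ₂ ^ k : ℂ) : ℍ) = ((ζ₂ ^ k : ℂ) : ℍ) * qj := by
      rw [qj_mul_coe]; simp
    have expand : ((ζ₁ ^ k : ℂ):ℍ) * ((A : ℍ) + (B : ℍ) * qj) * (((starRingEnd ℂ) ζ₂ ^ k : ℂ):ℍ)
        = ((ζ₁ ^ k : ℂ):ℍ) * (A : ℍ) * (((starRingEnd ℂ) ζ₂ ^ k : ℂ):ℍ)
          + ((ζ₁ ^ k : ℂ):ℍ) * (B : ℍ) * (qj * (((starRingEnd ℂ) ζ₂ ^ k : ℂ):ℍ)) := by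
      noncomm_ring
    rw [expand, e3]
    congr 1
    · rw [← Quaternion.coeComplex_mul, ← Quaternion.coeComplex_mul]
      exact congrArg _ (by rw [mul_pow]; ring)
    · rw [← mul_assoc, ← Quaternion.coeComplex_mul, ← Quaternion.coeComplex_mul]
      exact congrArg (· * qj) (congrArg _ (by rw [mul_pow]; ring))
  rw [tsum_congr term]
  -- summability of the complex sequences
  have h1 : ‖ζ₁ * (starRingEnd ℂ) ζ₂‖ < 1 := by
    rw [norm_mul, RCLike.norm_conj]
    nlinarith [norm_nonneg ζ₁, norm_nonneg ζ₂]
  have h2 : ‖ζ₁ * ζ₂‖ < 1 := by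
    rw [norm_mul]
    nlinarith [norm_nonneg ζ₁, norm_nonneg ζ₂]
  have s1 : Summable (fun k : ℕ => A * (ζ₁ * (starRingEnd ℂ) ζ₂) ^ k) :=
    (summable_geometric_of_norm_lt_one h1).mul_left A
  have s2 : Summable (fun k : ℕ => B * (ζ₁ * ζ₂) ^ k) :=
    (summable_geometric_of_norm_lt_one h2).mul_left B
  have sp : Summable (fun k : ℕ =>
      (A * (ζ₁ * (starRingEnd ℂ) ζ₂) ^ k, B * (ζ₁ * ζ₂) ^ k)) := (s1.hasSum.prodMk s2.hasSum).summable
  have hmap := (LinearMap.toContinuousLinearMap Fmap).map_tsum sp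
  have Feq : ∀ k : ℕ,
      ((A * (ζ₁ * (starRingEnd ℂ) ζ₂) ^ k : ℂ) : ℍ) + ((B * (ζ₁ * ζ₂) ^ k : ℂ) : ℍ) * qj
      = LinearMap.toContinuousLinearMap Fmap
          (A * (ζ₁ * (starRingEnd ℂ) ζ₂) ^ k, B * (ζ₁ * ζ₂) ^ k) :=
    fun k => rfl
  rw [tsum_congr Feq, ← hmap]
  have hts : (∑' k : ℕ, (A * (ζ₁ * (starRingEnd ℂ) ζ₂) ^ k, B * (ζ₁ * ζ₂) ^ k))
      = (∑' k : ℕ, A * (ζ₁ * (starRingEnd ℂ) ζ₂) ^ k, ∑' k : ℕ, B * (ζ₁ * ζ₂) ^ k) :=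
    (s1.hasSum.prodMk s2.hasSum).tsum_eq
  have t1 : (∑' k : ℕ, A * (ζ₁ * (starRingEnd ℂ) ζ₂) ^ k)
      = A / (1 - ζ₁ * (starRingEnd ℂ) ζ₂) := by
    rw [tsum_mul_left, tsum_geometric_of_norm_lt_one h1, div_eq_mul_inv]
  have t2 : (∑' k : ℕ, B * (ζ₁ * ζ₂) ^ k) = B / (1 - ζ₁ * ζ₂) := by
    rw [tsum_mul_left, tsum_geometric_of_norm_lt_one h2, div_eq_mul_inv]
  rw [hts, t1, t2]
  rfl
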